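/- Let p ≥ 1, let μ ∈ ℝ^p, let Σ be a p×p real positive definite matrix, and let α, η > 0. Let the law of the random vector Y on ℝ^p be the Beta-scale mixture of Gaussians, i.e. the measure (Beta(α, η)).bind (fun r => N_p(μ, r⁻¹ • Σ)). Then Y is absolutely continuous with respect to Lebesgue measure on ℝ^p with density h(y) = Γ(α+η) / ( (2π)^{p/2} (det Σ)^{1/2} Γ(α) Γ(η) ) · ∫_0^1 exp( −r·(y−μ)ᵀΣ⁻¹(y−μ)/2 ) · r^{α+p/2−1} (1−r)^{η−1} dr. (This is Theorem A.1 of the paper, with the confluent hypergeometric function M(α, η+p/2+α, −(y−μ)ᵀΣ⁻¹(y−μ)/2) written via its Euler integral representation.) -/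

import Mathlib

open MeasureTheory Matrix

/-- The multivariate Gaussian distribution `N_p(μ, Σ)` on `ℝ^p`, given by its Lebesgue
density `(2π)^(−p/2) (det Σ)^(−1/2) exp(−(y−μ)ᵀ Σ⁻¹ (y−μ)/2)`. -/
noncomputable def mvGaussian {p : ℕ} (μ : Fin p → ℝ) (S : Matrix (Fin p) (Fin p) ℝ) :
    Measure (Fin p → ℝ) :=
  volume.withDensity fun y =>
    ENNReal.ofReal ((2 * Real.pi) ^ (-(p : ℝ) / 2) * S.det ^ (-(1 : ℝ) / 2) *
      Real.exp (-((y - μ) ⬝ᵥ (S⁻¹ *ᵥ (y - μ))) / 2))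

/-- The Beta distribution on `(0,1)` with parameters `a, b`. -/
noncomputable def betaMeasure (a b : ℝ) : Measure ℝ :=
  volume.withDensity fun x =>
    ENNReal.ofReal (if x ∈ Set.Ioo (0 : ℝ) 1 then
      x ^ (a - 1) * (1 - x) ^ (b - 1) / (Real.Gamma a * Real.Gamma b / Real.Gamma (a + b))
    else 0)

/-- Integrability of the Beta integrand on `(0,1)`. -/
lemma integrableOn_betaIntegrand {a b : ℝ} (ha : 0 < a) (hb : 0 < b) :
    IntegrableOn (fun r : ℝ => r ^ (a - 1) * (1 - r) ^ (b - 1)) (Set.Ioo 0 1) := by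
  have h : IntervalIntegrable
      (fun x : ℝ => (x : ℂ) ^ ((a : ℂ) - 1) * (1 - (x : ℂ)) ^ ((b : ℂ) - 1)) volume 0 1 :=
    Complex.betaIntegral_convergent (by simpa using ha) (by simpa using hb)
  have h2 : IntegrableOn
      (fun x : ℝ => (x : ℂ) ^ ((a : ℂ) - 1) * (1 - (x : ℂ)) ^ ((b : ℂ) - 1)) (Set.Ioo 0 1) :=
    h.1.mono_set Set.Ioo_subset_Ioc_self
  refine h2.re.congr ?_
  filter_upwards [ae_restrict_mem measurableSet_Ioo] with x hx
  have h1 : ((a : ℂ) - 1) = ((a - 1 : ℝ) : ℂ) := by push_cast; ring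
  have h2' : ((b : ℂ) - 1) = ((b - 1 : ℝ) : ℂ) := by push_cast; ring
  have h3 : (1 - (x : ℂ)) = ((1 - x : ℝ) : ℂ) := by push_cast; ring
  rw [h1, h2', h3, ← Complex.ofReal_cpow hx.1.le, ← Complex.ofReal_cpow (by linarith [hx.2]),
    ← Complex.ofReal_mul]
  simp

/-- Integrability of the Beta integrand times an exponential factor on `(0,1)`. -/
lemma integrableOn_expBetaIntegrand {a b : ℝ} (q : ℝ) (ha : 0 < a) (hb : 0 < b) :
    IntegrableOn (fun r : ℝ =>
      Real.exp (-r * q / 2) * r ^ (a - 1) * (1 - r) ^ (b - 1)) (Set.Ioo 0 1) := by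
  have hbase := integrableOn_betaIntegrand ha hb
  refine Integrable.mono' (hbase.const_mul (Real.exp (|q| / 2))) ?_ ?_
  · apply Measurable.aestronglyMeasurable
    fun_prop
  · filter_upwards [ae_restrict_mem measurableSet_Ioo] with r hr
    have hr0 : (0 : ℝ) < r := hr.1
    have hr1 : (0 : ℝ) < 1 - r := by linarith [hr.2]
    have hnn : (0 : ℝ) ≤ r ^ (a - 1) * (1 - r) ^ (b - 1) :=
      mul_nonneg (Real.rpow_nonneg hr0.le _) (Real.rpow_nonneg hr1.le _)
    have hexp : Real.exp (-r * q / 2) ≤ Real.exp (|q| / 2) := by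
      apply Real.exp_le_exp.2
      have h1 : -r * q / 2 ≤ |(-r * q / 2)| := le_abs_self _
      have h2 : |(-r * q / 2)| = |r| * |q| / 2 := by
        rw [abs_div, abs_mul, abs_neg]
        norm_num
      have h3 : |r| ≤ 1 := by rw [abs_of_pos hr0]; linarith [hr.2]
      nlinarith [abs_nonneg q]
    rw [Real.norm_eq_abs, abs_of_nonneg (by positivity)]
    calc Real.exp (-r * q / 2) * r ^ (a - 1) * (1 - r) ^ (b - 1)
        = Real.exp (-r * q / 2) * (r ^ (a - 1) * (1 - r) ^ (b - 1)) := by ring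
      _ ≤ Real.exp (|q| / 2) * (r ^ (a - 1) * (1 - r) ^ (b - 1)) :=
          mul_le_mul_of_nonneg_right hexp hnn

theorem beta_scale_mixture_gaussian_density
    (p : ℕ) (hp : 1 ≤ p) (μ : Fin p → ℝ) (S : Matrix (Fin p) (Fin p) ℝ) (hS : S.PosDef)
    (α η : ℝ) (hα : 0 < α) (hη : 0 < η) :
    (betaMeasure α η).bind (fun r => mvGaussian μ (r⁻¹ • S)) =
      volume.withDensity (fun y =>
        ENNReal.ofReal (Real.Gamma (α + η) /
            ((2 * Real.pi) ^ ((p : ℝ) / 2) * S.det ^ ((1 : ℝ) / 2) *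
              Real.Gamma α * Real.Gamma η) *
          ∫ r in Set.Ioo (0 : ℝ) 1,
            Real.exp (-r * ((y - μ) ⬝ᵥ (S⁻¹ *ᵥ (y - μ))) / 2) *
              r ^ (α + (p : ℝ) / 2 - 1) * (1 - r) ^ (η - 1))) := by
  have hdet : 0 < S.det := hS.det_pos
  have hSunit : IsUnit S.det := hdet.ne'.isUnit
  have hGα := Real.Gamma_pos_of_pos hα
  have hGη := Real.Gamma_pos_of_pos hη
  have hGαη := Real.Gamma_pos_of_pos (by linarith : (0:ℝ) < α + η)
  have h2π : (0:ℝ) < 2 * Real.pi := by positivity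
  -- the conditional Gaussian density
  set F : ℝ → (Fin p → ℝ) → ENNReal := fun r y =>
    ENNReal.ofReal ((2 * Real.pi) ^ (-(p : ℝ) / 2) * (r⁻¹ • S).det ^ (-(1 : ℝ) / 2) *
      Real.exp (-((y - μ) ⬝ᵥ ((r⁻¹ • S)⁻¹ *ᵥ (y - μ))) / 2)) with hF
  -- measurability of the entries of (r⁻¹ • S)⁻¹ in r
  have hdetm : Measurable fun r : ℝ => (r⁻¹ • S).det := by
    exact (Continuous.matrix_det (continuous_id.smul continuous_const)).measurable.comp
      measurable_inv
  have hadj : ∀ i j, Measurable fun r : ℝ => (r⁻¹ • S).adjugate i j := by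
    intro i j
    have : Continuous fun c : ℝ => (c • S).adjugate i j := by
      exact ((continuous_apply j).comp ((continuous_apply i).comp
        (Continuous.matrix_adjugate (continuous_id.smul continuous_const))))
    exact this.measurable.comp measurable_inv
  have hentry : ∀ i j, Measurable fun r : ℝ => ((r⁻¹ • S)⁻¹) i j := by
    intro i j
    have heq : (fun r : ℝ => ((r⁻¹ • S)⁻¹) i j)
        = fun r => ((r⁻¹ • S).det)⁻¹ * ((r⁻¹ • S).adjugate i j) := by
      funext r
      rw [Matrix.inv_def, Matrix.smul_apply, Ring.inverse_eq_inv', smul_eq_mul]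
    rw [heq]
    exact (hdetm.inv).mul (hadj i j)
  -- measurability of the uncurried quadratic form
  have hquad : Measurable (Function.uncurry fun (r : ℝ) (y : Fin p → ℝ) =>
      (y - μ) ⬝ᵥ ((r⁻¹ • S)⁻¹ *ᵥ (y - μ))) := by
    simp only [Function.uncurry, dotProduct, Matrix.mulVec, Pi.sub_apply]
    apply Finset.measurable_sum
    intro i _
    apply Measurable.mul
    · exact ((measurable_pi_apply i).comp measurable_snd).sub measurable_const
    · apply Finset.measurable_sum
      intro j _
      exact ((hentry i j).comp measurable_fst).mul
        (((measurable_pi_apply j).comp measurable_snd).sub measurable_const)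
  -- measurability of the uncurried density
  have hFu : Measurable (Function.uncurry F) := by
    apply ENNReal.measurable_ofReal.comp
    apply Measurable.mul
    · apply Measurable.mul measurable_const
      have hr2 : Measurable fun x : ℝ => x ^ (-(1:ℝ)/2) := by fun_prop
      exact hr2.comp (hdetm.comp measurable_fst)
    · exact (hquad.neg.div_const 2).exp
  -- measurability of the kernel
  have hker : Measurable fun r : ℝ => mvGaussian μ (r⁻¹ • S) := by
    apply Measure.measurable_of_measurable_coe
    intro s hs
    simp only [mvGaussian, withDensity_apply _ hs]
    exact Measurable.lintegral_prod_right (ν := volume.restrict s) hFu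
  -- the beta density
  set g : ℝ → ENNReal := fun x =>
    ENNReal.ofReal (if x ∈ Set.Ioo (0 : ℝ) 1 then
      x ^ (α - 1) * (1 - x) ^ (η - 1) / (Real.Gamma α * Real.Gamma η / Real.Gamma (α + η))
    else 0) with hg
  have hgm : Measurable g := by
    apply ENNReal.measurable_ofReal.comp
    apply Measurable.ite measurableSet_Ioo ?_ measurable_const
    fun_prop
  -- the key pointwise identity
  have key : ∀ y : Fin p → ℝ, (∫⁻ r, F r y ∂betaMeasure α η) =
      ENNReal.ofReal (Real.Gamma (α + η) /
          ((2 * Real.pi) ^ ((p : ℝ) / 2) * S.det ^ ((1 : ℝ) / 2) *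
            Real.Gamma α * Real.Gamma η) *
        ∫ r in Set.Ioo (0 : ℝ) 1,
          Real.exp (-r * ((y - μ) ⬝ᵥ (S⁻¹ *ᵥ (y - μ))) / 2) *
            r ^ (α + (p : ℝ) / 2 - 1) * (1 - r) ^ (η - 1)) := by
    intro y
    set Q : ℝ := (y - μ) ⬝ᵥ (S⁻¹ *ᵥ (y - μ)) with hQQ
    set C : ℝ := Real.Gamma (α + η) /
        ((2 * Real.pi) ^ ((p : ℝ) / 2) * S.det ^ ((1 : ℝ) / 2) *
          Real.Gamma α * Real.Gamma η) with hC
    have hC0 : 0 < C := by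
      apply div_pos hGαη
      have := Real.rpow_pos_of_pos h2π ((p : ℝ) / 2)
      have := Real.rpow_pos_of_pos hdet ((1 : ℝ) / 2)
      positivity
    set h : ℝ → ℝ := fun r =>
      Real.exp (-r * Q / 2) * r ^ (α + (p : ℝ) / 2 - 1) * (1 - r) ^ (η - 1) with hh
    have hFy : Measurable fun r => F r y := hFu.of_uncurry_right
    have step1 : (∫⁻ r, F r y ∂betaMeasure α η) = ∫⁻ r, (g * fun r => F r y) r := by
      rw [betaMeasure, lintegral_withDensity_eq_lintegral_mul volume hgm hFy]
    have pointwise : (g * fun r => F r y)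
        = (Set.Ioo (0:ℝ) 1).indicator (fun r => ENNReal.ofReal (C * h r)) := by
      funext r
      by_cases hr : r ∈ Set.Ioo (0:ℝ) 1
      · rw [Set.indicator_of_mem hr]
        simp only [Pi.mul_apply, hg, hF, if_pos hr]
        have hr0 : (0:ℝ) < r := hr.1
        have hr1 : (0:ℝ) < 1 - r := by linarith [hr.2]
        -- compute the inverse matrix
        have hinv : (r⁻¹ • S)⁻¹ = r • S⁻¹ := by
          letI : Invertible (r⁻¹ : ℝ) := invertibleOfNonzero (inv_ne_zero hr0.ne')
          rw [Matrix.inv_smul S r⁻¹ hSunit, invOf_eq_inv, inv_inv]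
        have hquadr : (y - μ) ⬝ᵥ ((r⁻¹ • S)⁻¹ *ᵥ (y - μ)) = r * Q := by
          rw [hinv, Matrix.smul_mulVec, dotProduct_smul, smul_eq_mul, hQQ]
        -- compute the determinant
        have hdetr : (r⁻¹ • S).det = (r ^ (p:ℝ))⁻¹ * S.det := by
          rw [Matrix.det_smul, Fintype.card_fin, inv_pow, ← Real.rpow_natCast r p]
        have hdetpow : (r⁻¹ • S).det ^ (-(1:ℝ)/2)
            = r ^ ((p:ℝ)/2) * S.det ^ (-(1:ℝ)/2) := by
          rw [hdetr, Real.mul_rpow (by positivity) hdet.le]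
          congr 1
          rw [← Real.rpow_neg hr0.le, ← Real.rpow_mul hr0.le]
          congr 1
          ring
        rw [hquadr, hdetpow, ← ENNReal.ofReal_mul (by positivity)]
        congr 1
        have hrsplit : r ^ (α + (p:ℝ)/2 - 1) = r ^ (α - 1) * r ^ ((p:ℝ)/2) := by
          rw [← Real.rpow_add hr0]; ring_nf
        have h2πe : (2 * Real.pi) ^ (-(p:ℝ)/2) = ((2 * Real.pi) ^ ((p:ℝ)/2))⁻¹ := by
          rw [← Real.rpow_neg h2π.le]; ring_nf
        have hdete : S.det ^ (-(1:ℝ)/2) = (S.det ^ ((1:ℝ)/2))⁻¹ := by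
          rw [← Real.rpow_neg hdet.le]; ring_nf
        have hne1 : (2 * Real.pi) ^ ((p:ℝ)/2) ≠ 0 := (Real.rpow_pos_of_pos h2π _).ne'
        have hne2 : S.det ^ ((1:ℝ)/2) ≠ 0 := (Real.rpow_pos_of_pos hdet _).ne'
        simp only [hh, hC]
        rw [hrsplit, h2πe, hdete]
        have hexp : -(r * Q) / 2 = -r * Q / 2 := by ring
        rw [hexp]
        field_simp
      · rw [Set.indicator_of_notMem hr]
        simp only [Pi.mul_apply, hg, if_neg hr, ENNReal.ofReal_zero, zero_mul]
    have hint : IntegrableOn (fun r => C * h r) (Set.Ioo (0:ℝ) 1) := by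
      have := (integrableOn_expBetaIntegrand Q (by positivity : (0:ℝ) < α + (p:ℝ)/2) hη)
      exact this.const_mul C
    have hnn : 0 ≤ᶠ[ae (volume.restrict (Set.Ioo (0:ℝ) 1))] fun r => C * h r := by
      filter_upwards [ae_restrict_mem measurableSet_Ioo] with r hr
      have hr0 : (0:ℝ) < r := hr.1
      have hr1 : (0:ℝ) < 1 - r := by linarith [hr.2]
      have : 0 ≤ h r := by
        rw [hh]
        have := Real.rpow_nonneg hr0.le (α + (p:ℝ)/2 - 1)
        have := Real.rpow_nonneg hr1.le (η - 1)
        positivity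
      positivity
    rw [step1, pointwise, lintegral_indicator measurableSet_Ioo,
      ← ofReal_integral_eq_lintegral_ofReal hint hnn, integral_const_mul]
  -- conclude
  ext s hs
  rw [Measure.bind_apply hs hker.aemeasurable, withDensity_apply _ hs]
  have hMG : ∀ r : ℝ, (mvGaussian μ (r⁻¹ • S)) s = ∫⁻ y in s, F r y := by
    intro r
    rw [mvGaussian, withDensity_apply _ hs]
  calc (∫⁻ r, (mvGaussian μ (r⁻¹ • S)) s ∂betaMeasure α η)
      = ∫⁻ r, (∫⁻ y in s, F r y) ∂betaMeasure α η := by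
        exact lintegral_congr fun r => hMG r
    _ = ∫⁻ y in s, ∫⁻ r, F r y ∂betaMeasure α η := by
        have : SFinite (betaMeasure α η) := by rw [betaMeasure]; infer_instance
        exact lintegral_lintegral_swap hFu.aemeasurable
    _ = ∫⁻ y in s, ENNReal.ofReal (Real.Gamma (α + η) /
          ((2 * Real.pi) ^ ((p : ℝ) / 2) * S.det ^ ((1 : ℝ) / 2) *
            Real.Gamma α * Real.Gamma η) *
        ∫ r in Set.Ioo (0 : ℝ) 1,
          Real.exp (-r * ((y - μ) ⬝ᵥ (S⁻¹ *ᵥ (y - μ))) / 2) *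
            r ^ (α + (p : ℝ) / 2 - 1) * (1 - r) ^ (η - 1)) := by
        exact lintegral_congr fun y => key y
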